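/- CDC(S) admits a junction tree if and only if every maximum spanning tree of its intersection graph K_S is a junction tree of CDC(S). -/

import Mathlib

namespace JT

open Finset SimpleGraph
open scoped Classical


open scoped Classical

variable {V : Type*} [Fintype V]

/-- Edges of `G` with both endpoints in `U`. -/
noncomputable def edgesWithin (G : SimpleGraph V) (U : Finset V) : Finset (Sym2 V) :=
  Finset.univ.filter (fun e => e ∈ G.edgeSet ∧ ∀ v ∈ e, v ∈ U)

lemma mem_edgesWithin {G : SimpleGraph V} {U : Finset V} {e : Sym2 V} :
    e ∈ edgesWithin G U ↔ e ∈ G.edgeSet ∧ ∀ v ∈ e, v ∈ U := by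
  simp [edgesWithin]

/-- Connectivity of `U` within `G` : any two members of `U` are joined by a
walk whose support stays inside `U`. -/
def ConnOn (G : SimpleGraph V) (U : Finset V) : Prop :=
  ∀ i ∈ U, ∀ j ∈ U, ∃ p : G.Walk i j, ∀ v ∈ p.support, v ∈ U

lemma edgesWithin_mono {G : SimpleGraph V} {U W : Finset V} (h : U ⊆ W) :
    edgesWithin G U ⊆ edgesWithin G W := by
  intro e he
  rw [mem_edgesWithin] at he ⊢
  exact ⟨he.1, fun v hv => h (he.2 v hv)⟩

/-- Splitting off a degree-one vertex. -/
lemma card_edgesWithin_erase {G : SimpleGraph V} {U : Finset V} {a x : V}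
    (ha : a ∈ U) (hx : x ∈ U) (hadj : G.Adj a x)
    (huniq : ∀ w ∈ U, G.Adj a w → w = x) :
    (edgesWithin G U).card = (edgesWithin G (U.erase a)).card + 1 := by
  have hxa : x ≠ a := fun h => (h ▸ hadj).ne' rfl
  have hsplit : edgesWithin G U = insert s(a, x) (edgesWithin G (U.erase a)) := by
    ext e
    rw [mem_edgesWithin, Finset.mem_insert, mem_edgesWithin]
    constructor
    · rintro ⟨heE, hU⟩
      by_cases hae : a ∈ e
      · left
        obtain ⟨w, rfl⟩ := Sym2.mem_iff_exists.mp hae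
        have : G.Adj a w := heE
        have hw : w = x := huniq w (hU w (Sym2.mem_mk_right a w)) this
        rw [hw]
      · right
        exact ⟨heE, fun v hv => Finset.mem_erase.mpr ⟨fun h => hae (h ▸ hv), hU v hv⟩⟩
    · rintro (rfl | ⟨heE, hU⟩)
      · exact ⟨hadj, by rintro v hv; rcases Sym2.mem_iff.mp hv with rfl | rfl <;> assumption⟩
      · exact ⟨heE, fun v hv => Finset.mem_of_mem_erase (hU v hv)⟩
  have hnot : s(a, x) ∉ edgesWithin G (U.erase a) := by
    rw [mem_edgesWithin]
    rintro ⟨-, h⟩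
    exact (Finset.mem_erase.mp (h a (Sym2.mem_mk_left a x))).1 rfl
  rw [hsplit, Finset.card_insert_of_notMem hnot]

/-- In an acyclic graph, if there is an edge within `U`, there is a vertex of `U`
with exactly one neighbour in `U`. -/
lemma exists_leaf {G : SimpleGraph V} (hG : G.IsAcyclic) {U : Finset V}
    (hne : (edgesWithin G U).Nonempty) :
    ∃ a x, a ∈ U ∧ x ∈ U ∧ G.Adj a x ∧ ∀ w ∈ U, G.Adj a w → w = x := by
  classical
  -- the set of lengths of nontrivial paths with support inside U
  set L : Set ℕ := {n | 0 < n ∧ ∃ (u v : V) (p : G.Walk u v),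
    p.IsPath ∧ (∀ y ∈ p.support, y ∈ U) ∧ p.length = n} with hL
  obtain ⟨e, he⟩ := hne
  rw [mem_edgesWithin] at he
  induction e using Sym2.ind with
  | _ u0 v0 =>
  have hadj0 : G.Adj u0 v0 := he.1
  have hLne : L.Nonempty := by
    refine ⟨1, Nat.one_pos, u0, v0, Walk.cons hadj0 Walk.nil, ?_, ?_, rfl⟩
    · simp [Walk.isPath_def, hadj0.ne]
    · intro y hy
      simp only [Walk.support_cons, Walk.support_nil, List.mem_cons, List.mem_singleton] at hy
      rcases hy with rfl | hy
      · exact he.2 _ (Sym2.mem_mk_left _ _)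
      · simp at hy
        exact hy ▸ he.2 _ (Sym2.mem_mk_right _ _)
  have hLbdd : BddAbove L := by
    refine ⟨Fintype.card V, ?_⟩
    rintro n ⟨-, u, v, p, hp, -, rfl⟩
    exact le_of_lt hp.length_lt
  have hmem := Nat.sSup_mem hLne hLbdd
  obtain ⟨hpos, u, v, p, hp, hsupp, hlen⟩ := hmem
  -- p is a maximal path inside U; its first vertex is the leaf
  cases p with
  | nil => simp at hlen; omega
  | cons hadj q =>
    rename_i x'
    refine ⟨u, x', hsupp u (Walk.start_mem_support _), hsupp x' ?_, hadj, ?_⟩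
    · simp [Walk.support_cons]
    intro w hwU hw
    by_contra hwx
    have hq : q.IsPath := hp.of_cons
    have hus : u ∉ q.support := (Walk.cons_isPath_iff _ _).mp hp |>.2
    by_cases hws : w ∈ (Walk.cons hadj q).support
    · -- cycle: contradiction with acyclicity
      have hwu : w ≠ u := hw.ne'
      have hws' : w ∈ q.support := by
        simpa [Walk.support_cons, hwu] using hws
      have ht := (Walk.cons hadj q).takeUntil w hws
      have htp : ((Walk.cons hadj q).takeUntil w hws).IsPath := hp.takeUntil hws
      have hedge : s(w, u) ∉ ((Walk.cons hadj q).takeUntil w hws).edges := by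
        intro hmem'
        rw [Sym2.eq_swap] at hmem'
        have : s(u, w) ∈ (Walk.cons hadj q).edges :=
          Walk.edges_takeUntil_subset _ hws hmem'
        rw [Walk.edges_cons] at this
        rcases List.mem_cons.mp this with heq | hmem''
        · rw [Sym2.eq_iff] at heq
          rcases heq with ⟨-, h2⟩ | ⟨h1, h2⟩
          · exact hwx h2
          · exact hw.ne' h2
        · exact hus (Walk.fst_mem_support_of_mem_edges q hmem'')
      have hc := SimpleGraph.Path.cons_isCycle
        ⟨(Walk.cons hadj q).takeUntil w hws, htp⟩ hw.symm hedge
      exact hG _ hc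
    · -- extend the path: contradiction with maximality
      have hp' : (Walk.cons hw.symm (Walk.cons hadj q)).IsPath :=
        (Walk.cons_isPath_iff _ _).mpr ⟨hp, hws⟩
      have : (Walk.cons hw.symm (Walk.cons hadj q)).length ∈ L := by
        refine ⟨by simp, w, v, _, hp', ?_, rfl⟩
        intro y hy
        rw [Walk.support_cons] at hy
        rcases List.mem_cons.mp hy with rfl | hy
        · exact hwU
        · exact hsupp y hy
      have hle := le_csSup hLbdd this
      simp only [Walk.length_cons] at hle hlen
      omega

/-- In an acyclic graph, at most `|U| - 1` edges lie within `U`. -/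
lemma card_edgesWithin_lt_of_acyclic {G : SimpleGraph V} (hG : G.IsAcyclic) :
    ∀ U : Finset V, U.Nonempty → (edgesWithin G U).card + 1 ≤ U.card := by
  intro U
  induction U using Finset.strongInduction with
  | _ U ih =>
    intro hUne
    rcases (edgesWithin G U).eq_empty_or_nonempty with h | h
    · have := Finset.card_pos.mpr hUne
      simp only [h, Finset.card_empty, zero_add]
      omega
    · obtain ⟨a, x, ha, hx, hadj, huniq⟩ := exists_leaf hG h
      have hxa : x ≠ a := fun h' => (h' ▸ hadj).ne' rfl
      have hcard := card_edgesWithin_erase ha hx hadj huniq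
      have hx' : x ∈ U.erase a := Finset.mem_erase.mpr ⟨hxa, hx⟩
      have := ih (U.erase a) (Finset.erase_ssubset ha) ⟨x, hx'⟩
      rw [Finset.card_erase_of_mem ha] at this
      have hUpos : 1 ≤ U.card := Finset.card_pos.mpr hUne
      omega

/-- Equality case: acyclic plus the maximal number of edges forces connectivity. -/
lemma connOn_of_acyclic_of_card {G : SimpleGraph V} (hG : G.IsAcyclic) :
    ∀ U : Finset V, (edgesWithin G U).card + 1 = U.card → ConnOn G U := by
  intro U
  induction U using Finset.strongInduction with
  | _ U ih =>
    intro hcard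
    rcases (edgesWithin G U).eq_empty_or_nonempty with h | h
    · rw [h] at hcard
      simp only [Finset.card_empty, zero_add] at hcard
      obtain ⟨z, hz⟩ := Finset.card_eq_one.mp hcard.symm
      subst hz
      intro i hi j hj
      simp only [Finset.mem_singleton] at hi hj
      subst hi; subst hj
      exact ⟨Walk.nil, by simp⟩
    · obtain ⟨a, x, ha, hx, hadj, huniq⟩ := exists_leaf hG h
      have hxa : x ≠ a := fun h' => (h' ▸ hadj).ne' rfl
      have hsplit := card_edgesWithin_erase ha hx hadj huniq
      have hx' : x ∈ U.erase a := Finset.mem_erase.mpr ⟨hxa, hx⟩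
      have hconn : ConnOn G (U.erase a) := by
        apply ih (U.erase a) (Finset.erase_ssubset ha)
        rw [Finset.card_erase_of_mem ha]
        omega
      intro i hi j hj
      by_cases hia : i = a <;> by_cases hja : j = a
      · subst hia; subst hja
        exact ⟨Walk.nil, by simpa using ha⟩
      · subst hia
        obtain ⟨q, hq⟩ := hconn x hx' j (Finset.mem_erase.mpr ⟨hja, hj⟩)
        refine ⟨Walk.cons hadj q, ?_⟩
        intro v hv
        rw [Walk.support_cons] at hv
        rcases List.mem_cons.mp hv with rfl | hv
        · exact ha
        · exact Finset.mem_of_mem_erase (hq v hv)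
      · subst hja
        obtain ⟨q, hq⟩ := hconn i (Finset.mem_erase.mpr ⟨hia, hi⟩) x hx'
        refine ⟨q.append (Walk.cons (hadj.symm) Walk.nil), ?_⟩
        intro v hv
        rw [Walk.support_append] at hv
        rcases List.mem_append.mp hv with hv | hv
        · exact Finset.mem_of_mem_erase (hq v hv)
        · simp only [Walk.support_cons, Walk.support_nil, List.tail_cons,
            List.mem_singleton] at hv
          exact hv ▸ ha
      · obtain ⟨q, hq⟩ := hconn i (Finset.mem_erase.mpr ⟨hia, hi⟩) j
          (Finset.mem_erase.mpr ⟨hja, hj⟩)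
        exact ⟨q, fun v hv => Finset.mem_of_mem_erase (hq v hv)⟩

/-- Lower bound on the number of edges within a connected vertex set. -/
lemma card_le_of_connOn {G : SimpleGraph V} {U : Finset V}
    (hconn : ConnOn G U) (hne : U.Nonempty) :
    U.card ≤ (edgesWithin G U).card + 1 := by
  classical
  obtain ⟨r, hr⟩ := hne
  set D : V → Set ℕ := fun v => {n | ∃ p : G.Walk v r, (∀ y ∈ p.support, y ∈ U) ∧ p.length = n}
    with hD
  set d : V → ℕ := fun v => sInf (D v) with hd
  have hDne : ∀ v ∈ U, (D v).Nonempty := by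
    intro v hv
    obtain ⟨p, hp⟩ := hconn v hv r hr
    exact ⟨p.length, p, hp, rfl⟩
  have key : ∀ v, v ∈ U → v ≠ r →
      ∃ x, G.Adj v x ∧ x ∈ U ∧ s(v, x) ∈ edgesWithin G U ∧ d x + 1 = d v := by
    intro v hv hvr
    have hmem := Nat.sInf_mem (hDne v hv)
    obtain ⟨p, hsupp, hlen⟩ := hmem
    cases p with
    | nil => exact absurd rfl hvr
    | cons hadj q =>
      rename_i x
      have hxU : x ∈ U := hsupp x (by simp [Walk.support_cons])
      have hq : ∀ y ∈ q.support, y ∈ U := fun y hy =>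
        hsupp y (by rw [Walk.support_cons]; exact List.mem_cons_of_mem _ hy)
      have h1 : d x ≤ q.length := Nat.sInf_le ⟨q, hq, rfl⟩
      have h2 : d v ≤ d x + 1 := by
        have hmx := Nat.sInf_mem (hDne x hxU)
        obtain ⟨m, hm, hmlen⟩ := hmx
        refine Nat.sInf_le ⟨Walk.cons hadj m, ?_, by simp [hmlen]; rfl⟩
        intro y hy
        rw [Walk.support_cons] at hy
        rcases List.mem_cons.mp hy with rfl | hy
        · exact hv
        · exact hm y hy
      have h3 : d v = q.length + 1 := by simpa using hlen.symm
      refine ⟨x, hadj, hxU, ?_, by omega⟩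
      rw [mem_edgesWithin]
      exact ⟨hadj, by rintro y hy; rcases Sym2.mem_iff.mp hy with rfl | rfl <;> assumption⟩
  set f : V → Sym2 V := fun v =>
    if h : v ∈ U ∧ v ≠ r then s(v, Classical.choose (key v h.1 h.2)) else s(v, v) with hf
  have hmaps : ∀ v ∈ U.erase r, f v ∈ edgesWithin G U := by
    intro v hv
    obtain ⟨hvr, hvU⟩ := Finset.mem_erase.mp hv
    rw [hf]
    simp only [dif_pos (And.intro hvU hvr)]
    exact (Classical.choose_spec (key v hvU hvr)).2.2.1
  have hinj : Set.InjOn f (U.erase r) := by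
    intro v hv w hw hvw
    obtain ⟨hvr, hvU⟩ := Finset.mem_erase.mp (Finset.mem_coe.mp hv)
    obtain ⟨hwr, hwU⟩ := Finset.mem_erase.mp (Finset.mem_coe.mp hw)
    rw [hf] at hvw
    simp only [dif_pos (And.intro hvU hvr), dif_pos (And.intro hwU hwr)] at hvw
    obtain ⟨-, -, -, hdv⟩ := Classical.choose_spec (key v hvU hvr)
    obtain ⟨-, -, -, hdw⟩ := Classical.choose_spec (key w hwU hwr)
    rw [Sym2.eq_iff] at hvw
    rcases hvw with ⟨h1, -⟩ | ⟨h1, h2⟩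
    · exact h1
    · rw [← h1] at hdw
      rw [h2] at hdv
      omega
  have := Finset.card_le_card_of_injOn f hmaps hinj
  rw [Finset.card_erase_of_mem hr] at this
  omega

/-- Any nonempty finite type carries a tree. -/
lemma exists_isTree [Nonempty V] : ∃ T : SimpleGraph V, T.IsTree := by
  classical
  obtain ⟨G, hGmem, hGmax⟩ := Finset.exists_max_image
    (Finset.univ.filter fun G : SimpleGraph V => G.IsAcyclic)
    (fun G => (edgesWithin G Finset.univ).card)
    ⟨⊥, by simp⟩
  rw [Finset.mem_filter] at hGmem
  have hGac : G.IsAcyclic := hGmem.2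
  refine ⟨G, ⟨?_, hGac⟩⟩
  rw [connected_iff]
  refine ⟨fun u v => ?_, ‹Nonempty V›⟩
  by_contra hreach
  have huv : u ≠ v := fun h => hreach (h ▸ Reachable.refl u)
  set G' : SimpleGraph V := G ⊔ fromEdgeSet {s(u, v)} with hG'
  have hle : G ≤ G' := le_sup_left
  have hGadj : ¬G.Adj u v := fun h => hreach h.reachable
  have hG'ac : G'.IsAcyclic := by
    intro z c hc
    by_cases he : s(u, v) ∈ c.edges
    · have := (adj_and_reachable_delete_edges_iff_exists_cycle (G := G')).mpr ⟨z, c, hc, he⟩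
      have hreach' : (G' \ fromEdgeSet {s(u, v)}).Reachable u v := this.2
      refine hreach (hreach'.mono ?_)
      intro a b hab
      have h1 : G'.Adj a b := hab.1
      have h2 : ¬(fromEdgeSet {s(u, v)}).Adj a b := hab.2
      rcases h1 with h1 | h1
      · exact h1
      · exact absurd h1 h2
    · have hsub : ∀ e ∈ c.edges, e ∈ G.edgeSet := by
        intro e hee
        have := c.edges_subset_edgeSet hee
        rw [hG', edgeSet_sup, edgeSet_fromEdgeSet] at this
        rcases this with h | h
        · exact h
        · exact absurd h.1 (fun h' => he (h' ▸ hee))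
      exact hGac _ (hc.transfer hsub)
  have hmore : (edgesWithin G Finset.univ).card < (edgesWithin G' Finset.univ).card := by
    apply Finset.card_lt_card
    rw [Finset.ssubset_iff_of_subset]
    · refine ⟨s(u, v), ?_, ?_⟩
      · rw [mem_edgesWithin]
        exact ⟨Or.inr ((fromEdgeSet_adj _).mpr ⟨rfl, huv⟩), by simp⟩
      · rw [mem_edgesWithin]
        rintro ⟨h, -⟩
        exact hGadj h
    · intro e hee
      rw [mem_edgesWithin] at hee ⊢
      exact ⟨edgeSet_mono hle hee.1, hee.2⟩
  have := hGmax G' (Finset.mem_filter.mpr ⟨Finset.mem_univ _, hG'ac⟩)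
  omega


end JT

/-- A junction tree for a labeled collection of finite index sets. -/
def IsJunctionTree {ι α : Type*} [DecidableEq α] (G : SimpleGraph ι)
    (f : ι → Finset α) : Prop :=
  G.IsTree ∧ ∀ (i j : ι) (p : G.Walk i j), p.IsPath →
    (∀ x ∈ p.support, f i ∩ f j ⊆ f x) ∧
    (∀ a b : ι, s(a, b) ∈ p.edges → f i ∩ f j ⊆ f a ∩ f b)

open scoped Classical in
/-- The weight of a spanning tree `T` of the intersection graph `K_𝒮`:
the sum over the edges of `T` of the cardinality of the middle set `S1 ∩ S2`. -/
noncomputable def jtWeight {α : Type*} [DecidableEq α] (𝒮 : Finset (Finset α))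
    (T : SimpleGraph {S // S ∈ 𝒮}) : ℕ :=
  ∑ e : Sym2 {S // S ∈ 𝒮}, if e ∈ T.edgeSet then
    Sym2.lift ⟨fun (A B : {S // S ∈ 𝒮}) => ((A : Finset α) ∩ (B : Finset α)).card,
      fun A B => by simp [Finset.inter_comm]⟩ e
  else 0

/-- A maximum spanning tree of the intersection graph `K_𝒮`. -/
def IsMaxSpanningTree {α : Type*} [DecidableEq α] (𝒮 : Finset (Finset α))
    (T : SimpleGraph {S // S ∈ 𝒮}) : Prop :=
  T.IsTree ∧ ∀ T' : SimpleGraph {S // S ∈ 𝒮}, T'.IsTree → jtWeight 𝒮 T' ≤ jtWeight 𝒮 T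

namespace JT

open Finset SimpleGraph
open scoped Classical
open scoped Classical

variable {α : Type*} [DecidableEq α] (𝒮 : Finset (Finset α))

/-- The vertices whose set contains `x`. -/
noncomputable def Ux (x : α) : Finset {S // S ∈ 𝒮} :=
  Finset.univ.filter (fun S => x ∈ (S : Finset α))

lemma mem_Ux {x : α} {S : {S // S ∈ 𝒮}} : S ∈ Ux 𝒮 x ↔ x ∈ (S : Finset α) := by
  simp [Ux]

lemma subset_sup (S : {S // S ∈ 𝒮}) : (S : Finset α) ⊆ 𝒮.sup id :=
  Finset.le_sup (f := id) S.2

lemma Ux_nonempty {x : α} (hx : x ∈ 𝒮.sup id) : (Ux 𝒮 x).Nonempty := by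
  obtain ⟨S, hS, hxS⟩ := Finset.mem_sup.mp hx
  exact ⟨⟨S, hS⟩, (mem_Ux 𝒮).mpr hxS⟩

/-- The weight of a graph is the sum over ground elements `x`
of the number of edges within `Ux x`. -/
lemma jtWeight_eq (T : SimpleGraph {S // S ∈ 𝒮}) :
    jtWeight 𝒮 T = ∑ x ∈ 𝒮.sup id, (edgesWithin T (Ux 𝒮 x)).card := by
  rw [jtWeight]
  have hterm : ∀ e : Sym2 {S // S ∈ 𝒮},
      (if e ∈ T.edgeSet then
        Sym2.lift ⟨fun (A B : {S // S ∈ 𝒮}) => ((A : Finset α) ∩ (B : Finset α)).card,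
          fun A B => by simp [Finset.inter_comm]⟩ e else 0)
      = ∑ x ∈ 𝒮.sup id, (if e ∈ edgesWithin T (Ux 𝒮 x) then 1 else 0) := by
    intro e
    induction e using Sym2.ind with
    | _ A B =>
      by_cases he : s(A, B) ∈ T.edgeSet
      · rw [if_pos he, Sym2.lift_mk]
        have hmem : ∀ x : α, s(A, B) ∈ edgesWithin T (Ux 𝒮 x) ↔
            x ∈ (A : Finset α) ∩ (B : Finset α) := by
          intro x
          rw [mem_edgesWithin, Finset.mem_inter]
          constructor
          · rintro ⟨-, h⟩
            exact ⟨(mem_Ux 𝒮).mp (h A (Sym2.mem_mk_left _ _)),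
              (mem_Ux 𝒮).mp (h B (Sym2.mem_mk_right _ _))⟩
          · rintro ⟨h1, h2⟩
            refine ⟨he, ?_⟩
            rintro v hv
            rcases Sym2.mem_iff.mp hv with rfl | rfl <;>
              [exact (mem_Ux 𝒮).mpr h1; exact (mem_Ux 𝒮).mpr h2]
        simp only [hmem]
        rw [← Finset.card_filter]
        congr 1
        apply Finset.ext
        intro x
        rw [Finset.mem_filter, Finset.mem_inter]
        exact ⟨fun h => ⟨subset_sup 𝒮 A h.1, h⟩, fun h => h.2⟩
      · rw [if_neg he]
        symm
        apply Finset.sum_eq_zero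
        intro x hx
        rw [if_neg]
        rw [mem_edgesWithin]
        rintro ⟨h, -⟩
        exact he h
  rw [Finset.sum_congr rfl fun e _ => hterm e, Finset.sum_comm]
  apply Finset.sum_congr rfl
  intro x hx
  rw [← Finset.card_filter]
  congr 1
  apply Finset.ext
  intro e
  simp [Finset.mem_filter]

/-- Connectivity of all the `Ux` within a tree makes it a junction tree. -/
lemma junction_of_conn (T : SimpleGraph {S // S ∈ 𝒮}) (hT : T.IsTree)
    (hconn : ∀ x ∈ 𝒮.sup id, ConnOn T (Ux 𝒮 x)) :
    IsJunctionTree T (fun S => (S : Finset α)) := by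
  refine ⟨hT, ?_⟩
  intro i j p hp
  have hsupp : ∀ x ∈ (i : Finset α) ∩ (j : Finset α), ∀ v ∈ p.support,
      x ∈ (v : Finset α) := by
    intro x hx v hv
    rw [Finset.mem_inter] at hx
    have hxX : x ∈ 𝒮.sup id := subset_sup 𝒮 i hx.1
    obtain ⟨q, hq⟩ := hconn x hxX i ((mem_Ux 𝒮).mpr hx.1) j ((mem_Ux 𝒮).mpr hx.2)
    have huniq := hT.IsAcyclic.path_unique ⟨p, hp⟩ q.toPath
    have hps : p.support ⊆ q.support := by
      rw [show p = (q.toPath : T.Walk i j) from congrArg Subtype.val huniq]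
      exact q.support_toPath_subset
    exact (mem_Ux 𝒮).mp (hq v (hps hv))
  constructor
  · intro v hv x hx
    exact hsupp x hx v hv
  · intro a b hab x hx
    rw [Finset.mem_inter]
    exact ⟨hsupp x hx a (p.fst_mem_support_of_mem_edges hab),
      hsupp x hx b (p.snd_mem_support_of_mem_edges hab)⟩

/-- A junction tree has all `Ux` connected. -/
lemma conn_of_junction (J : SimpleGraph {S // S ∈ 𝒮})
    (hJ : IsJunctionTree J (fun S => (S : Finset α))) (x : α) :
    ConnOn J (Ux 𝒮 x) := by
  intro i hi j hj
  obtain ⟨w⟩ := hJ.1.isConnected.preconnected i j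
  refine ⟨w.toPath, ?_⟩
  intro v hv
  have := (hJ.2 i j w.toPath w.toPath.2).1 v hv
  rw [mem_Ux]
  exact this (Finset.mem_inter.mpr ⟨(mem_Ux 𝒮).mp hi, (mem_Ux 𝒮).mp hj⟩)

theorem admits_junctionTree_iff_all_maxSpanningTrees' (h𝒮 : 𝒮.Nonempty) :
    (∃ T : SimpleGraph {S // S ∈ 𝒮}, IsJunctionTree T (fun S => (S : Finset α))) ↔
      ∀ T : SimpleGraph {S // S ∈ 𝒮}, IsMaxSpanningTree 𝒮 T →
        IsJunctionTree T (fun S => (S : Finset α)) := by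
  have hVne : Nonempty {S // S ∈ 𝒮} := ⟨⟨h𝒮.choose, h𝒮.choose_spec⟩⟩
  constructor
  · rintro ⟨J, hJ⟩ T ⟨hTtree, hTmax⟩
    -- weight of the junction tree is the maximum possible
    have hJw : jtWeight 𝒮 J = ∑ x ∈ 𝒮.sup id, ((Ux 𝒮 x).card - 1) := by
      rw [jtWeight_eq]
      apply Finset.sum_congr rfl
      intro x hx
      have h1 := card_edgesWithin_lt_of_acyclic hJ.1.IsAcyclic (Ux 𝒮 x) (Ux_nonempty 𝒮 hx)
      have h2 := card_le_of_connOn (conn_of_junction 𝒮 J hJ x) (Ux_nonempty 𝒮 hx)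
      omega
    have hTle : ∀ x ∈ 𝒮.sup id,
        (edgesWithin T (Ux 𝒮 x)).card ≤ (Ux 𝒮 x).card - 1 := by
      intro x hx
      have h1 := card_edgesWithin_lt_of_acyclic hTtree.IsAcyclic (Ux 𝒮 x) (Ux_nonempty 𝒮 hx)
      omega
    have hTw : jtWeight 𝒮 T = ∑ x ∈ 𝒮.sup id, ((Ux 𝒮 x).card - 1) := by
      have h1 := hTmax J hJ.1
      have h2 : jtWeight 𝒮 T ≤ ∑ x ∈ 𝒮.sup id, ((Ux 𝒮 x).card - 1) := by
        rw [jtWeight_eq]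
        exact Finset.sum_le_sum hTle
      omega
    rw [jtWeight_eq] at hTw
    have heach := (Finset.sum_eq_sum_iff_of_le hTle).mp hTw
    apply junction_of_conn 𝒮 T hTtree
    intro x hx
    apply connOn_of_acyclic_of_card hTtree.IsAcyclic
    have hpos := Finset.card_pos.mpr (Ux_nonempty 𝒮 hx)
    have := heach x hx
    omega
  · intro h
    obtain ⟨T0, hT0⟩ := exists_isTree (V := {S // S ∈ 𝒮})
    obtain ⟨T, hTmem, hTmax⟩ := Finset.exists_max_image
      (Finset.univ.filter fun G : SimpleGraph {S // S ∈ 𝒮} => G.IsTree)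
      (jtWeight 𝒮) ⟨T0, Finset.mem_filter.mpr ⟨Finset.mem_univ _, hT0⟩⟩
    refine ⟨T, h T ⟨(Finset.mem_filter.mp hTmem).2, ?_⟩⟩
    intro T' hT'
    exact hTmax T' (Finset.mem_filter.mpr ⟨Finset.mem_univ _, hT'⟩)

end JT

/-- `CDC(𝒮)` admits a junction tree iff every maximum spanning tree of
its intersection graph `K_𝒮` is a junction tree of `CDC(𝒮)`. -/

theorem admits_junctionTree_iff_all_maxSpanningTrees {α : Type*} [DecidableEq α]
    (𝒮 : Finset (Finset α)) (h𝒮 : 𝒮.Nonempty) :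
    (∃ T : SimpleGraph {S // S ∈ 𝒮}, IsJunctionTree T (fun S => (S : Finset α))) ↔
      ∀ T : SimpleGraph {S // S ∈ 𝒮}, IsMaxSpanningTree 𝒮 T →
        IsJunctionTree T (fun S => (S : Finset α)) := by
  exact JT.admits_junctionTree_iff_all_maxSpanningTrees' 𝒮 h𝒮
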